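/- arXiv:2411.08671 — 4 statements merged into one kernel-verified Lean document; each statement's English description precedes it below -/
import Mathlib

section
/- For k = 1, BPE is optimal: for every string s, bpe(s,1) = OPT(s,1). -/
variable {α : Type*} [DecidableEq α]

/-- Full greedy left-to-right replacement of the pair `ab` by `c`. -/
def replace (a b c : α) : List α → List α
  | [] => []
  | [x] => [x]
  | x :: y :: rest =>
    if x = a ∧ y = b then c :: replace a b c rest
    else x :: replace a b c (y :: rest)

/-- Replacement of every occurrence of the symbol `c` by the pair `ab`. -/
def expand (a b c : α) : List α → List α
  | [] => []
  | x :: rest => if x = c then a :: b :: expand a b c rest else x :: expand a b c rest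

/-- `t` is obtained from `s` by one partial replacement rule (replacing some
non-overlapping occurrences of a pair `ab` by a symbol `c`, invertibly). -/
def PartialStep (s t : List α) : Prop := ∃ a b c : α, expand a b c t = s

/-- `t` is obtained from `s` by one full merge of a pair `ab` into a fresh symbol `c`. -/
def FullStep (s t : List α) : Prop := ∃ a b c : α, c ∉ s ∧ t = replace a b c s

/-- A greedy (BPE) step: a full merge minimizing the resulting length. -/
def GreedyStep (s t : List α) : Prop :=
  FullStep s t ∧ ∀ u : List α, FullStep s u → t.length ≤ u.length

/-- `t` is obtained from `s` by a partial merge sequence of length `k`. -/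
def PartialReach : ℕ → List α → List α → Prop
  | 0, s, t => t = s
  | k+1, s, t => ∃ u, PartialStep s u ∧ PartialReach k u t

/-- `t` is obtained from `s` by a full merge sequence of length `k`. -/
def FullReach : ℕ → List α → List α → Prop
  | 0, s, t => t = s
  | k+1, s, t => ∃ u, FullStep s u ∧ FullReach k u t

/-- `t` is obtained from `s` by a run of BPE with `k` greedy merge rounds. -/
def GreedyReach : ℕ → List α → List α → Prop
  | 0, s, t => t = s
  | k+1, s, t => ∃ u, GreedyStep s u ∧ GreedyReach k u t

/-- Optimal utility of partial merge sequences of length `k` (the OPE optimum). -/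
noncomputable def OPT (s : List α) (k : ℕ) : ℕ :=
  sSup {u : ℕ | ∃ t : List α, PartialReach k s t ∧ u = s.length - t.length}

/-- Optimal utility of full merge sequences of length `k` (the OMS optimum). -/
noncomputable def OPTm (s : List α) (k : ℕ) : ℕ :=
  sSup {u : ℕ | ∃ t : List α, FullReach k s t ∧ u = s.length - t.length}

/-- A pair packing: non-overlapping indices at which a common pair occurs in `s`
(0-based indices). -/
def IsPairPacking (s : List α) (P : Finset ℕ) : Prop :=
  (∀ i ∈ P, i + 1 < s.length) ∧
  (∀ i ∈ P, ∀ j ∈ P, i ≠ j → 2 ≤ Nat.dist i j) ∧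
  ∃ a b : α, ∀ i ∈ P, s[i]? = some a ∧ s[i+1]? = some b

/-- A `k`-packing: a disjoint union of `k` pair packings. -/
def IsKPacking (s : List α) (k : ℕ) (P : Fin k → Finset ℕ) : Prop :=
  (∀ i, IsPairPacking s (P i)) ∧ ∀ i j, i ≠ j → Disjoint (P i) (P j)

/-- `Pk s k`: maximum size of a `k`-packing of `s`. -/
noncomputable def Pk (s : List α) (k : ℕ) : ℕ :=
  sSup {n : ℕ | ∃ P : Fin k → Finset ℕ, IsKPacking s k P ∧ n = ∑ i, (P i).card}

/-- Number of (possibly overlapping) occurrences of the pair `ab` in `s`. -/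
def freq (s : List α) (a b : α) : ℕ :=
  ((Finset.range s.length).filter (fun i => s[i]? = some a ∧ s[i+1]? = some b)).card

/-- `Fk s k`: total number of occurrences of the `k` most frequent pairs in `s`. -/
noncomputable def Fk (s : List α) (k : ℕ) : ℕ :=
  sSup {n : ℕ | ∃ Q : Finset (α × α), Q.card ≤ k ∧ n = ∑ p ∈ Q, freq s p.1 p.2}

lemma expand_nil_iff (a b c : α) (m : List α) : expand a b c m = [] ↔ m = [] := by
  cases m with
  | nil => simp [expand]
  | cons x r =>
    constructor
    · intro h
      by_cases hx : x = c <;> simp [expand, hx] at h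
    · intro h; simp at h

/-- Greedy left-to-right merging is at least as good as any partial replacement. -/
lemma lemA (a b c c₀ : α) : ∀ (n : ℕ) (m : List α), m.length ≤ n →
    (replace a b c (expand a b c₀ m)).length ≤ m.length := by
  intro n
  induction n with
  | zero =>
    intro m hm
    have : m = [] := List.length_eq_zero_iff.mp (Nat.le_zero.mp hm)
    subst this; simp [expand, replace]
  | succ n ih =>
    intro m hm
    match m with
    | [] => simp [expand, replace]
    | x :: m' =>
      have hm' : m'.length ≤ n := by simpa using hm
      by_cases hx : x = c₀
      · have he : expand a b c₀ (x :: m') = a :: b :: expand a b c₀ m' := by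
          simp [expand, hx]
        rw [he, replace, if_pos ⟨rfl, rfl⟩]
        have := ih m' hm'
        simp only [List.length_cons]
        omega
      · have he : expand a b c₀ (x :: m') = x :: expand a b c₀ m' := by
          simp [expand, hx]
        rw [he]
        rcases hrest : expand a b c₀ m' with _ | ⟨y, rest⟩
        · simp [replace]
        · rw [replace]
          by_cases hab : x = a ∧ y = b
          · rw [if_pos hab]
            have hkey : (replace a b c rest).length ≤ m'.length := by
              cases m' with
              | nil => simp [expand] at hrest
              | cons z m'' =>
                have hm'' : m''.length ≤ n := by
                  simp at hm'; omega
                by_cases hz : z = c₀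
                · have : expand a b c₀ (z :: m'') = a :: b :: expand a b c₀ m'' := by
                    simp [expand, hz]
                  rw [this] at hrest
                  injection hrest with h1 h2
                  have hb : b ≠ c₀ := fun hbc => hx (by rw [hab.1, h1, hab.2]; exact hbc)
                  have hre : rest = expand a b c₀ (b :: m'') := by
                    rw [← h2]; simp [expand, hb]
                  rw [hre]
                  have := ih (b :: m'') (by simpa using hm')
                  simpa using this
                · have : expand a b c₀ (z :: m'') = z :: expand a b c₀ m'' := by
                    simp [expand, hz]
                  rw [this] at hrest
                  injection hrest with h1 h2
                  rw [← h2]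
                  have := ih m'' hm''
                  simp only [List.length_cons]
                  omega
            simp only [List.length_cons]
            omega
          · rw [if_neg hab, ← hrest]
            have := ih m' hm'
            simp only [List.length_cons]
            omega

/-- `expand` is a left inverse of `replace` when `c` is fresh. -/
lemma lemB (a b c : α) : ∀ s : List α, c ∉ s → expand a b c (replace a b c s) = s := by
  intro s
  induction s using replace.induct a b with
  | case1 => intro _; simp [replace, expand]
  | case2 x =>
    intro hc
    have hx : x ≠ c := fun hxe => hc (by rw [hxe]; exact List.mem_singleton_self _)
    simp [replace, expand, hx]
  | case3 x y rest hxy ih =>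
    intro hc
    have hcr : c ∉ rest := fun hm => hc (List.mem_cons_of_mem _ (List.mem_cons_of_mem _ hm))
    rw [replace, if_pos hxy, expand, if_pos rfl, ih hcr, hxy.1, hxy.2]
  | case4 x y rest hxy ih =>
    intro hc
    have hcr : c ∉ y :: rest := fun hm => hc (List.mem_cons_of_mem _ hm)
    have hx : x ≠ c := fun hxe => hc (by rw [hxe]; exact List.mem_cons_self)
    rw [replace, if_neg hxy, expand, if_neg hx, ih hcr]

/-- `expand` increases length by the number of occurrences of `c`. -/
lemma lemC (a b c : α) : ∀ m : List α, (expand a b c m).length = m.length + m.count c := by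
  intro m
  induction m with
  | nil => simp [expand]
  | cons x r ih =>
    by_cases hx : x = c
    · simp [expand, hx, ih, List.count_cons]
      omega
    · simp [expand, hx, ih, List.count_cons, hx]
      omega

/-- for `k = 1`, BPE is optimal: any run of one greedy full merge
achieves utility `OPT(s,1)`. -/
theorem stmt4 {α : Type*} [DecidableEq α] (s t : List α) (h : GreedyReach 1 s t) :
    s.length - t.length = OPT s 1 := by
  obtain ⟨u, hg, hu⟩ := h
  have hu' : t = u := hu
  subst hu'
  obtain ⟨⟨a₁, b₁, c₁, hc₁, hrep⟩, hmin⟩ := hg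
  -- t is reachable by a partial step
  have hpart : PartialStep s t := ⟨a₁, b₁, c₁, by rw [hrep]; exact lemB a₁ b₁ c₁ s hc₁⟩
  have hmem : s.length - t.length ∈
      {u : ℕ | ∃ t' : List α, PartialReach 1 s t' ∧ u = s.length - t'.length} :=
    ⟨t, ⟨t, hpart, rfl⟩, rfl⟩
  have hbdd : BddAbove {u : ℕ | ∃ t' : List α, PartialReach 1 s t' ∧ u = s.length - t'.length} := by
    refine ⟨s.length, fun x hx => ?_⟩
    obtain ⟨t', _, hxe⟩ := hx
    omega
  have hle : ∀ x ∈ {u : ℕ | ∃ t' : List α, PartialReach 1 s t' ∧ u = s.length - t'.length},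
      x ≤ s.length - t.length := by
    rintro x ⟨t', ⟨v, ⟨a, b, c₀, hexp⟩, hv⟩, hxe⟩
    have hv' : t' = v := hv
    subst hv'
    subst hxe
    -- the full merge of (a,b) with fresh c₁ is at least as good as the partial step
    have hfull : FullStep s (replace a b c₁ s) := ⟨a, b, c₁, hc₁, rfl⟩
    have h1 : t.length ≤ (replace a b c₁ s).length := hmin _ hfull
    have h2 : (replace a b c₁ s).length ≤ t'.length := by
      rw [← hexp]
      exact lemA a b c₁ c₀ t'.length t' le_rfl
    omega
  exact le_antisymm (le_csSup hbdd hmem) (csSup_le ⟨_, hmem⟩ hle)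
end

section
/- For every string s of length n and every k, if a partial merge sequence of length k transforms s into s', then |s| − |s'| ≤ P_k(s), the size of an optimal k-packing of s. In particular, OPT(s,k) ≤ P_k(s). -/
variable {α : Type*} [DecidableEq α]

lemma expand_append (a b c : α) (u v : List α) :
    expand a b c (u ++ v) = expand a b c u ++ expand a b c v := by
  induction u with
  | nil => simp [expand]
  | cons x tl ih =>
    simp only [List.cons_append, expand, ih]
    split <;> simp [ih]

lemma expand_length (a b c : α) (u : List α) :
    (expand a b c u).length = u.length + u.count c := by
  induction u with
  | nil => simp [expand]
  | cons x tl ih =>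
    simp only [expand, List.count_cons]
    split <;> rename_i h <;> simp [ih, h] <;> omega

def opePos (c : α) [DecidableEq α] (u : List α) (j : ℕ) : ℕ := j + (u.take j).count c

noncomputable def opeMap (c : α) [DecidableEq α] (u : List α) (j : ℕ) : ℕ :=
  if u[j]? = some c then opePos c u j + 1 else opePos c u j

lemma count_take_mono (c : α) (u : List α) {i j : ℕ} (h : i ≤ j) :
    (u.take i).count c ≤ (u.take j).count c := by
  have hs := (List.take_sublist i (u.take j)).count_le c
  rwa [List.take_take, min_eq_left h] at hs

lemma opePos_lt (c : α) (u : List α) {i j : ℕ} (h : i < j) : opePos c u i < opePos c u j := by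
  have := count_take_mono c u h.le
  unfold opePos; omega

lemma opePos_succ_c {c : α} {u : List α} {j : ℕ} (h : u[j]? = some c) :
    opePos c u (j + 1) = opePos c u j + 2 := by
  unfold opePos
  rw [List.take_succ, h]
  simp [List.count_append, List.count_cons]
  omega

lemma opePos_succ_ne {c x : α} {u : List α} {j : ℕ} (h : u[j]? = some x) (hx : x ≠ c) :
    opePos c u (j + 1) = opePos c u j + 1 := by
  unfold opePos
  rw [List.take_succ, h]
  simp [List.count_append, List.count_cons, hx]
  omega

lemma opePos_mono (c : α) (u : List α) {i j : ℕ} (h : i ≤ j) :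
    opePos c u i ≤ opePos c u j := by
  rcases eq_or_lt_of_le h with rfl | h1
  · exact le_rfl
  · exact (opePos_lt c u h1).le

lemma opePos_sep {c : α} {u : List α} {j j' : ℕ} (h : u[j]? = some c) (hlt : j < j') :
    opePos c u j + 2 ≤ opePos c u j' := by
  have h2 : opePos c u (j + 1) ≤ opePos c u j' := opePos_mono c u hlt
  rw [opePos_succ_c h] at h2; exact h2

lemma opePos_add_two (c : α) (u : List α) {j j' : ℕ} (h : j + 2 ≤ j') :
    opePos c u j + 2 ≤ opePos c u j' := by
  have h1 := opePos_lt c u (show j < j + 1 by omega)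
  have h2 := opePos_lt c u (show j + 1 < j' by omega)
  omega

lemma opeMap_strictMono (c : α) (u : List α) : StrictMono (opeMap c u) := by
  intro j j' hlt
  unfold opeMap
  have hm := opePos_lt c u hlt
  by_cases hj : u[j]? = some c
  · have hs := opePos_sep hj hlt
    by_cases hj' : u[j']? = some c
    · rw [if_pos hj, if_pos hj']; omega
    · rw [if_pos hj, if_neg hj']; omega
  · by_cases hj' : u[j']? = some c
    · rw [if_neg hj, if_pos hj']; omega
    · rw [if_neg hj, if_neg hj']; omega

lemma opePos_ne_opeMap {c : α} {u : List α} {j : ℕ} (h : u[j]? = some c) (j' : ℕ) :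
    opePos c u j ≠ opeMap c u j' := by
  unfold opeMap
  by_cases hj' : u[j']? = some c
  · rw [if_pos hj']
    rcases lt_trichotomy j j' with h1 | h1 | h1
    · have := opePos_lt c u h1; omega
    · subst h1; omega
    · have := opePos_sep hj' h1; omega
  · rw [if_neg hj']
    have hne : j ≠ j' := by rintro rfl; exact hj' h
    rcases lt_or_gt_of_ne hne with h1 | h1
    · exact (opePos_lt c u h1).ne
    · exact (opePos_lt c u h1).ne'

omit [DecidableEq α] in
lemma lt_len_of_get? {l : List α} {n : ℕ} {x : α} (h : l[n]? = some x) : n < l.length := by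
  by_contra hc
  rw [List.getElem?_eq_none (by omega)] at h
  simp at h

lemma expand_get1 (a b c : α) (u : List α) {j : ℕ} {x : α} (hx : u[j]? = some x) :
    (expand a b c u)[opePos c u j]? = some (if x = c then a else x) := by
  have hj : j < u.length := lt_len_of_get? hx
  have hx' : u[j] = x := by rw [List.getElem?_eq_getElem hj] at hx; exact Option.some.inj hx
  have key : expand a b c u = expand a b c (u.take j) ++ expand a b c (u.drop j) := by
    rw [← expand_append, List.take_append_drop]
  have hlen : (expand a b c (u.take j)).length = opePos c u j := by
    rw [expand_length, List.length_take, opePos]; omega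
  have hd : u.drop j = x :: u.drop (j + 1) := by
    rw [← List.getElem_cons_drop hj, hx']
  rw [key, List.getElem?_append_right (le_of_eq hlen), hlen, Nat.sub_self, hd]
  by_cases hxc : x = c <;> simp [expand, hxc]

lemma expand_get2 (a b c : α) (u : List α) {j : ℕ} (hx : u[j]? = some c) :
    (expand a b c u)[opePos c u j + 1]? = some b := by
  have hj : j < u.length := lt_len_of_get? hx
  have hx' : u[j] = c := by rw [List.getElem?_eq_getElem hj] at hx; exact Option.some.inj hx
  have key : expand a b c u = expand a b c (u.take j) ++ expand a b c (u.drop j) := by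
    rw [← expand_append, List.take_append_drop]
  have hlen : (expand a b c (u.take j)).length = opePos c u j := by
    rw [expand_length, List.length_take, opePos]; omega
  have hd : u.drop j = c :: u.drop (j + 1) := by
    rw [← List.getElem_cons_drop hj, hx']
  rw [key, List.getElem?_append_right (by omega), hlen]
  have : opePos c u j + 1 - opePos c u j = 1 := by omega
  rw [this, hd]
  simp [expand]

lemma card_filter_eq_count (c : α) (u : List α) :
    ((Finset.range u.length).filter (fun j => u[j]? = some c)).card = u.count c := by
  induction u with
  | nil => simp
  | cons x tl ih =>
    rw [Finset.card_filter] at *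
    rw [List.length_cons, Finset.sum_range_succ']
    simp only [List.getElem?_cons_succ, List.getElem?_cons_zero, Option.some.injEq,
      List.count_cons]
    by_cases h : x = c
    · subst h; simp [ih]
    · simp [ih, h, beq_iff_eq, fun hc : c = x => h hc.symm]

lemma two_le_dist {x y : ℕ} (h : x + 2 ≤ y ∨ y + 2 ≤ x) : 2 ≤ Nat.dist x y := by
  rcases h with h | h <;> simp [Nat.dist] <;> omega

lemma dist_cases {x y : ℕ} (h : 2 ≤ Nat.dist x y) : x + 2 ≤ y ∨ y + 2 ≤ x := by
  simp [Nat.dist] at h; omega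

lemma step_pack (s u : List α) (hstep : PartialStep s u) (k : ℕ) (P : Fin k → Finset ℕ)
    (hP : IsKPacking u k P) :
    ∃ P' : Fin (k + 1) → Finset ℕ, IsKPacking s (k + 1) P' ∧
      s.length - u.length + ∑ i, (P i).card ≤ ∑ i, (P' i).card := by
  classical
  obtain ⟨a, b, c, rfl⟩ := hstep
  set C : Finset ℕ := (Finset.range u.length).filter (fun j => u[j]? = some c) with hC
  have hopeMono : StrictMono (opePos c u) := fun _ _ h => opePos_lt c u h
  have hopeInj : Function.Injective (opePos c u) := hopeMono.injective
  have hmapInj : Function.Injective (opeMap c u) := (opeMap_strictMono c u).injective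
  -- pair packing for the new (expanded) positions
  have hpack0 : IsPairPacking (expand a b c u) (C.image (opePos c u)) := by
    refine ⟨?_, ?_, a, b, ?_⟩
    · intro m hm
      obtain ⟨j, hj, rfl⟩ := Finset.mem_image.mp hm
      exact lt_len_of_get? (expand_get2 a b c u (Finset.mem_filter.mp hj).2)
    · intro m hm m' hm' hne
      obtain ⟨j, hj, rfl⟩ := Finset.mem_image.mp hm
      obtain ⟨j', hj', rfl⟩ := Finset.mem_image.mp hm'
      have hjc : u[j]? = some c := (Finset.mem_filter.mp hj).2
      have hj'c : u[j']? = some c := (Finset.mem_filter.mp hj').2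
      have hjj : j ≠ j' := by rintro rfl; exact hne rfl
      rcases lt_or_gt_of_ne hjj with h1 | h1
      · exact two_le_dist (Or.inl (opePos_sep hjc h1))
      · exact two_le_dist (Or.inr (opePos_sep hj'c h1))
    · intro m hm
      obtain ⟨j, hj, rfl⟩ := Finset.mem_image.mp hm
      have hjc : u[j]? = some c := (Finset.mem_filter.mp hj).2
      have h1 := expand_get1 a b c u hjc
      rw [if_pos rfl] at h1
      exact ⟨h1, expand_get2 a b c u hjc⟩
  -- pair packings for the mapped old packings
  have hpackS : ∀ i, IsPairPacking (expand a b c u) ((P i).image (opeMap c u)) := by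
    intro i
    obtain ⟨hb, hd, x, y, hxy⟩ := hP.1 i
    have hsame : ∀ j ∈ P i, opeMap c u j = opePos c u j + (if x = c then 1 else 0) := by
      intro j hj
      have hx := (hxy j hj).1
      unfold opeMap
      by_cases hxc : x = c
      · rw [if_pos (show u[j]? = some c by rw [hx, hxc]), if_pos hxc]
      · rw [if_neg (by rw [hx]; exact fun hh => hxc (Option.some.inj hh)), if_neg hxc]
        omega
    have hval : ∀ j ∈ P i,
        (expand a b c u)[opeMap c u j]? = some (if x = c then b else x) ∧
        (expand a b c u)[opeMap c u j + 1]? = some (if y = c then a else y) := by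
      intro j hj
      obtain ⟨hx, hy⟩ := hxy j hj
      by_cases hxc : x = c
      · have hxc' : u[j]? = some c := by rw [hx, hxc]
        have hm : opeMap c u j = opePos c u j + 1 := by unfold opeMap; rw [if_pos hxc']
        have h2 := expand_get2 a b c u hxc'
        have h3 := expand_get1 a b c u hy
        rw [opePos_succ_c hxc'] at h3
        rw [if_pos hxc, hm]
        refine ⟨h2, ?_⟩
        have harith : opePos c u j + 1 + 1 = opePos c u j + 2 := rfl
        rw [harith]
        exact h3
      · have hm : opeMap c u j = opePos c u j := by
          unfold opeMap; rw [if_neg (by rw [hx]; exact fun hh => hxc (Option.some.inj hh))]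
        have h1 := expand_get1 a b c u hx
        rw [if_neg hxc] at h1
        have h3 := expand_get1 a b c u hy
        rw [opePos_succ_ne hx hxc] at h3
        rw [if_neg hxc]
        exact ⟨by rw [hm]; exact h1, by rw [hm]; exact h3⟩
    refine ⟨?_, ?_, (if x = c then b else x), (if y = c then a else y), ?_⟩
    · intro m hm
      obtain ⟨j, hj, rfl⟩ := Finset.mem_image.mp hm
      exact lt_len_of_get? (hval j hj).2
    · intro m hm m' hm' hne
      obtain ⟨j, hj, rfl⟩ := Finset.mem_image.mp hm
      obtain ⟨j', hj', rfl⟩ := Finset.mem_image.mp hm'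
      have hjj : j ≠ j' := by rintro rfl; exact hne rfl
      have hd2 := dist_cases (hd j hj j' hj' hjj)
      rw [hsame j hj, hsame j' hj']
      rcases hd2 with h1 | h1
      · exact two_le_dist (Or.inl (by have := opePos_add_two c u h1; omega))
      · exact two_le_dist (Or.inr (by have := opePos_add_two c u h1; omega))
    · intro m hm
      obtain ⟨j, hj, rfl⟩ := Finset.mem_image.mp hm
      exact hval j hj
  -- disjointness
  have hdisj0 : ∀ i2 : Fin k, Disjoint (C.image (opePos c u)) ((P i2).image (opeMap c u)) := by
    intro i2
    rw [Finset.disjoint_left]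
    rintro m hm hm'
    obtain ⟨j, hj, rfl⟩ := Finset.mem_image.mp hm
    obtain ⟨j', hj', hq⟩ := Finset.mem_image.mp hm'
    exact opePos_ne_opeMap (Finset.mem_filter.mp hj).2 j' hq.symm
  have hdisjS : ∀ i1 i2 : Fin k, i1 ≠ i2 →
      Disjoint ((P i1).image (opeMap c u)) ((P i2).image (opeMap c u)) := by
    intro i1 i2 hne
    rw [Finset.disjoint_left]
    rintro m hm hm'
    obtain ⟨j, hj, rfl⟩ := Finset.mem_image.mp hm
    obtain ⟨j', hj', hq⟩ := Finset.mem_image.mp hm'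
    have : j' = j := hmapInj hq
    subst this
    exact (Finset.disjoint_left.mp (hP.2 i1 i2 hne) hj) hj'
  refine ⟨fun i => Fin.cases (C.image (opePos c u)) (fun i' => (P i').image (opeMap c u)) i,
    ⟨?_, ?_⟩, ?_⟩
  · intro i
    induction i using Fin.cases with
    | zero => simpa using hpack0
    | succ i' => simpa using hpackS i'
  · intro i i' hne
    induction i using Fin.cases with
    | zero =>
      induction i' using Fin.cases with
      | zero => exact absurd rfl hne
      | succ i2 => simpa using hdisj0 i2
    | succ i1 =>
      induction i' using Fin.cases with
      | zero => simpa using (hdisj0 i1).symm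
      | succ i2 =>
        have hne2 : i1 ≠ i2 := by rintro rfl; exact hne rfl
        simpa using hdisjS i1 i2 hne2
  · rw [Fin.sum_univ_succ]
    simp only [Fin.cases_zero, Fin.cases_succ]
    have h0 : (C.image (opePos c u)).card = u.count c := by
      rw [Finset.card_image_of_injective _ hopeInj, hC]
      exact card_filter_eq_count c u
    have hS : ∀ i : Fin k, ((P i).image (opeMap c u)).card = (P i).card := fun i =>
      Finset.card_image_of_injective _ hmapInj
    have hsum : ∑ i : Fin k, ((P i).image (opeMap c u)).card = ∑ i : Fin k, (P i).card :=
      Finset.sum_congr rfl fun i _ => hS i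
    have hlen : (expand a b c u).length = u.length + u.count c := expand_length a b c u
    rw [h0, hsum]
    omega

omit [DecidableEq α] in
lemma sum_card_le (s : List α) (k : ℕ) (P : Fin k → Finset ℕ) (h : IsKPacking s k P) :
    ∑ i, (P i).card ≤ s.length := by
  classical
  have h1 : (Finset.univ.biUnion P).card = ∑ i, (P i).card :=
    Finset.card_biUnion (fun i _ j _ hij => h.2 i j hij)
  rw [← h1]
  calc (Finset.univ.biUnion P).card ≤ (Finset.range s.length).card := by
        apply Finset.card_le_card
        intro m hm
        obtain ⟨i, _, hmi⟩ := Finset.mem_biUnion.mp hm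
        exact Finset.mem_range.mpr (by have := (h.1 i).1 m hmi; omega)
    _ = s.length := Finset.card_range _

lemma key_pack : ∀ (k : ℕ) (s t : List α), PartialReach k s t →
    ∃ P : Fin k → Finset ℕ, IsKPacking s k P ∧ s.length - t.length ≤ ∑ i, (P i).card := by
  intro k
  induction k with
  | zero =>
    intro s t ht
    have hts : t = s := ht
    subst hts
    exact ⟨fun i => i.elim0, ⟨fun i => i.elim0, fun i => i.elim0⟩, by simp⟩
  | succ k ih =>
    intro s t ht
    obtain ⟨u, hsu, hut⟩ := ht
    obtain ⟨P, hP, hle⟩ := ih u t hut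
    obtain ⟨P', hP', hsum⟩ := step_pack s u hsu k P hP
    have hus : u.length ≤ s.length := by
      obtain ⟨a, b, c, he⟩ := hsu
      rw [← he, expand_length]; omega
    exact ⟨P', hP', by omega⟩

/-- the utility of any partial merge sequence of length `k` is at most
`P_k(s)`; in particular `OPT(s,k) ≤ P_k(s)`. -/
theorem stmt5 {α : Type*} [DecidableEq α] (s : List α) (k : ℕ) :
    (∀ t : List α, PartialReach k s t → s.length - t.length ≤ Pk s k) ∧
    OPT s k ≤ Pk s k := by
  classical
  have hbdd : BddAbove {n : ℕ | ∃ P : Fin k → Finset ℕ, IsKPacking s k P ∧ n = ∑ i, (P i).card} := by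
    refine ⟨s.length, ?_⟩
    rintro n ⟨P, hP, rfl⟩
    exact sum_card_le s k P hP
  have hmain : ∀ t : List α, PartialReach k s t → s.length - t.length ≤ Pk s k := by
    intro t ht
    obtain ⟨P, hP, hle⟩ := key_pack k s t ht
    exact hle.trans (le_csSup hbdd ⟨P, hP, rfl⟩)
  refine ⟨hmain, csSup_le' ?_⟩
  rintro n ⟨t, ht, rfl⟩
  exact hmain t ht
end

section
/- For every string s and every k ≥ 0, the utility of BPE with k merge rounds is at least one third of the optimal k-packing: bpe(s,k) ≥ P_k(s)/3. -/
variable {α : Type*} [DecidableEq α]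

section BPEAux

variable {α : Type*} [DecidableEq α]

/-- Start positions of the greedy left-to-right matches of the pair `ab`. -/
def gstarts (a b : α) : List α → List ℕ
  | [] => []
  | [_] => []
  | x :: y :: rest =>
    if x = a ∧ y = b then 0 :: (gstarts a b rest).map (· + 2)
    else (gstarts a b (y :: rest)).map (· + 1)

lemma gstarts_pos {a b x y : α} {rest : List α} (h : x = a ∧ y = b) :
    gstarts a b (x :: y :: rest) = 0 :: (gstarts a b rest).map (· + 2) := by
  simp only [gstarts]; rw [if_pos h]

lemma gstarts_neg {a b x y : α} {rest : List α} (h : ¬(x = a ∧ y = b)) :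
    gstarts a b (x :: y :: rest) = (gstarts a b (y :: rest)).map (· + 1) := by
  simp only [gstarts]; rw [if_neg h]

lemma replace_pos {a b c x y : α} {rest : List α} (h : x = a ∧ y = b) :
    replace a b c (x :: y :: rest) = c :: replace a b c rest := by
  simp only [replace]; rw [if_pos h]

lemma replace_neg {a b c x y : α} {rest : List α} (h : ¬(x = a ∧ y = b)) :
    replace a b c (x :: y :: rest) = x :: replace a b c (y :: rest) := by
  simp only [replace]; rw [if_neg h]

lemma length_replace (a b c : α) (l : List α) :
    (replace a b c l).length + (gstarts a b l).length = l.length := by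
  induction l using gstarts.induct a b with
  | case1 => simp [replace, gstarts]
  | case2 x => simp [replace, gstarts]
  | case3 x y rest h ih =>
    rw [replace_pos h, gstarts_pos h]
    simp only [List.length_cons, List.length_map]
    omega
  | case4 x y rest h ih =>
    rw [replace_neg h, gstarts_neg h]
    simp only [List.length_cons, List.length_map] at ih ⊢
    omega

lemma gstarts_pairwise (a b : α) (l : List α) :
    (gstarts a b l).Pairwise (fun p q => p + 2 ≤ q) := by
  induction l using gstarts.induct a b with
  | case1 => simp [gstarts]
  | case2 x => simp [gstarts]
  | case3 x y rest h ih =>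
    rw [gstarts_pos h]
    constructor
    · intro q hq
      obtain ⟨p, _, rfl⟩ := List.mem_map.mp hq
      omega
    · exact (List.pairwise_map).mpr (ih.imp (by omega))
  | case4 x y rest h ih =>
    rw [gstarts_neg h]
    exact (List.pairwise_map).mpr (ih.imp (by omega))

lemma gstarts_nodup (a b : α) (l : List α) : (gstarts a b l).Nodup :=
  (gstarts_pairwise a b l).imp (by omega)

lemma mem_gstarts {a b : α} {l : List α} {p : ℕ} (hp : p ∈ gstarts a b l) :
    l[p]? = some a ∧ l[p + 1]? = some b := by
  induction l using gstarts.induct a b generalizing p with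
  | case1 => simp [gstarts] at hp
  | case2 x => simp [gstarts] at hp
  | case3 x y rest h ih =>
    obtain ⟨rfl, rfl⟩ := h
    rw [gstarts_pos ⟨rfl, rfl⟩] at hp
    rcases List.mem_cons.mp hp with rfl | hp
    · simp
    · obtain ⟨q, hq, rfl⟩ := List.mem_map.mp hp
      simpa using ih hq
  | case4 x y rest h ih =>
    rw [gstarts_neg h] at hp
    obtain ⟨q, hq, rfl⟩ := List.mem_map.mp hp
    simpa using ih hq

lemma gstarts_cover {a b : α} {l : List α} {i : ℕ}
    (h1 : l[i]? = some a) (h2 : l[i + 1]? = some b) :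
    i ∈ gstarts a b l ∨ ∃ p ∈ gstarts a b l, p + 1 = i := by
  induction l using gstarts.induct a b generalizing i with
  | case1 => simp at h1
  | case2 x => rcases i with _ | i <;> simp at h2
  | case3 x y rest h ih =>
    rw [gstarts_pos h]
    rcases i with _ | i
    · exact Or.inl (List.mem_cons_self)
    rcases i with _ | j
    · exact Or.inr ⟨0, List.mem_cons_self, rfl⟩
    · simp only [List.getElem?_cons_succ] at h1 h2
      rcases ih h1 h2 with hj | ⟨p, hp, rfl⟩
      · exact Or.inl (List.mem_cons.mpr (Or.inr (List.mem_map.mpr ⟨j, hj, rfl⟩)))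
      · exact Or.inr ⟨p + 2, List.mem_cons.mpr (Or.inr (List.mem_map.mpr ⟨p, hp, rfl⟩)), by omega⟩
  | case4 x y rest h ih =>
    rw [gstarts_neg h]
    rcases i with _ | j
    · exfalso
      simp only [List.getElem?_cons_zero, Option.some_inj] at h1
      simp only [List.getElem?_cons_succ, List.getElem?_cons_zero, Option.some_inj] at h2
      exact h ⟨h1, h2⟩
    · rw [List.getElem?_cons_succ] at h1 h2
      rcases ih h1 h2 with hj | ⟨p, hp, rfl⟩
      · exact Or.inl (List.mem_map.mpr ⟨j, hj, rfl⟩)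
      · exact Or.inr ⟨p + 1, List.mem_map.mpr ⟨p, hp, rfl⟩, by omega⟩

lemma countP_eq_card_filter_toFinset (l : List ℕ) (h : l.Nodup) (p : ℕ → Bool) :
    l.countP p = (l.toFinset.filter (p ·)).card := by
  rw [List.countP_eq_length_filter, ← List.toFinset_card_of_nodup (h.filter p),
    List.toFinset_filter]

lemma countP_lt_le (L : List ℕ) (hN : L.Nodup) (i : ℕ) :
    L.countP (fun p => decide (p < i)) ≤ i := by
  rw [countP_eq_card_filter_toFinset L hN]
  calc (L.toFinset.filter (fun x => (decide (x < i) : Prop))).card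
      ≤ (Finset.range i).card := by
        apply Finset.card_le_card
        intro x hx
        simp only [Finset.mem_filter, decide_eq_true_eq] at hx
        exact Finset.mem_range.mpr hx.2
    _ = i := Finset.card_range i

lemma replace_getElem? (a b c : α) (l : List α) (i : ℕ)
    (h1 : i ∉ gstarts a b l) (h2 : ∀ p ∈ gstarts a b l, p + 1 ≠ i) :
    (replace a b c l)[i - (gstarts a b l).countP (fun p => decide (p < i))]? = l[i]? := by
  induction l using gstarts.induct a b generalizing i with
  | case1 => simp [replace, gstarts]
  | case2 x => simp [replace, gstarts]
  | case3 x y rest h ih =>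
    rw [gstarts_pos h] at h1 h2 ⊢
    rw [replace_pos h]
    have hi0 : i ≠ 0 := fun hi => h1 (hi ▸ List.mem_cons_self)
    have hi1 : i ≠ 1 := fun hi => h2 0 (List.mem_cons_self) (by omega)
    obtain ⟨j, rfl⟩ : ∃ j, i = j + 2 := ⟨i - 2, by omega⟩
    have hj1 : j ∉ gstarts a b rest := fun hj =>
      h1 (List.mem_cons.mpr (Or.inr (List.mem_map.mpr ⟨j, hj, rfl⟩)))
    have hj2 : ∀ p ∈ gstarts a b rest, p + 1 ≠ j := fun p hp hpj =>
      h2 (p + 2) (List.mem_cons.mpr (Or.inr (List.mem_map.mpr ⟨p, hp, rfl⟩))) (by omega)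
    have hcnt : (0 :: (gstarts a b rest).map (· + 2)).countP (fun p => decide (p < j + 2)) =
        (gstarts a b rest).countP (fun p => decide (p < j)) + 1 := by
      rw [List.countP_cons, List.countP_map]
      have : (gstarts a b rest).countP ((fun p => decide (p < j + 2)) ∘ (· + 2)) =
          (gstarts a b rest).countP (fun p => decide (p < j)) := by
        apply List.countP_congr
        intro q _
        simp only [Function.comp_apply, decide_eq_true_eq]
        omega
      rw [this]
      simp
    rw [hcnt]
    have hle := countP_lt_le (gstarts a b rest) (gstarts_nodup a b rest) j
    rw [show j + 2 - ((gstarts a b rest).countP (fun p => decide (p < j)) + 1) =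
        (j - (gstarts a b rest).countP (fun p => decide (p < j))) + 1 from by omega]
    rw [List.getElem?_cons_succ, ih j hj1 hj2]
    simp
  | case4 x y rest h ih =>
    rw [gstarts_neg h] at h1 h2 ⊢
    rw [replace_neg h]
    rcases i with _ | j
    · have hz : ((gstarts a b (y :: rest)).map (· + 1)).countP (fun p => decide (p < 0)) = 0 :=
        List.countP_eq_zero.mpr (by intro q _; simp)
      rw [hz]
      simp
    · have hj1 : j ∉ gstarts a b (y :: rest) := fun hj =>
        h1 (List.mem_map.mpr ⟨j, hj, rfl⟩)
      have hj2 : ∀ p ∈ gstarts a b (y :: rest), p + 1 ≠ j := fun p hp hpj =>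
        h2 (p + 1) (List.mem_map.mpr ⟨p, hp, rfl⟩) (by omega)
      have hcnt : ((gstarts a b (y :: rest)).map (· + 1)).countP (fun p => decide (p < j + 1)) =
          (gstarts a b (y :: rest)).countP (fun p => decide (p < j)) := by
        rw [List.countP_map]
        apply List.countP_congr
        intro q _
        simp only [Function.comp_apply, decide_eq_true_eq]
        omega
      rw [hcnt]
      have hle := countP_lt_le (gstarts a b (y :: rest)) (gstarts_nodup a b (y :: rest)) j
      rw [show j + 1 - (gstarts a b (y :: rest)).countP (fun p => decide (p < j)) =
          (j - (gstarts a b (y :: rest)).countP (fun p => decide (p < j))) + 1 from by omega]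
      rw [List.getElem?_cons_succ, ih j hj1 hj2]
      simp

lemma card_le_gstarts (a b : α) (l : List α) (P : Finset ℕ)
    (hocc : ∀ i ∈ P, l[i]? = some a ∧ l[i + 1]? = some b)
    (hdist : ∀ i ∈ P, ∀ j ∈ P, i ≠ j → 2 ≤ Nat.dist i j) :
    P.card ≤ (gstarts a b l).length := by
  classical
  rw [← List.toFinset_card_of_nodup (gstarts_nodup a b l)]
  set f : ℕ → ℕ := fun i => if i ∈ gstarts a b l then i else i - 1 with hf
  have hfb : ∀ i, i - 1 ≤ f i ∧ f i ≤ i := by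
    intro i
    simp only [hf]
    split <;> omega
  apply Finset.card_le_card_of_injOn f
  · intro i hi
    simp only [hf]
    rcases gstarts_cover (hocc i hi).1 (hocc i hi).2 with hm | ⟨p, hp, rfl⟩
    · rw [if_pos hm]; exact List.mem_toFinset.mpr hm
    · by_cases hm : p + 1 ∈ gstarts a b l
      · rw [if_pos hm]; exact List.mem_toFinset.mpr hm
      · rw [if_neg hm, Nat.add_sub_cancel]; exact List.mem_toFinset.mpr hp
  · intro i hi j hj hij
    by_contra hne
    have hd := hdist i hi j hj hne
    have h1 := hfb i
    have h2 := hfb j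
    simp only [Nat.dist] at hd
    omega

end BPEAux
section BPEMain

variable {α : Type*} [DecidableEq α]

lemma pairPacking_card_le_gain {s u : List α} (hg : GreedyStep s u) {P : Finset ℕ}
    (hPP : IsPairPacking s P) : P.card + u.length ≤ s.length := by
  obtain ⟨⟨a, b, c, hc, hu⟩, hmin⟩ := hg
  obtain ⟨hb, hd, a', b', hocc⟩ := hPP
  have h1 := card_le_gstarts a' b' s P hocc hd
  have h2 := length_replace a' b' c s
  have h3 := hmin (replace a' b' c s) ⟨a', b', c, hc, rfl⟩
  have h4 := length_replace a b c s
  rw [hu] at h3 ⊢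
  omega

lemma greedyReach_length_le : ∀ (k : ℕ) (s t : List α), GreedyReach k s t → t.length ≤ s.length
  | 0, s, t, h => le_of_eq (by rw [h])
  | (k+1), s, t, h => by
    obtain ⟨u, hgs, hr⟩ := h
    obtain ⟨a, b, c, hc, hu⟩ := hgs.1
    have h1 := length_replace a b c s
    have h2 := greedyReach_length_le k u t hr
    rw [hu] at h2
    omega

lemma le_Pk (s : List α) (k : ℕ) (P : Fin k → Finset ℕ) (hP : IsKPacking s k P) :
    ∑ i, (P i).card ≤ Pk s k := by
  apply le_csSup
  · refine ⟨k * s.length, ?_⟩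
    rintro n ⟨P', hP', rfl⟩
    calc ∑ i, (P' i).card ≤ ∑ _i : Fin k, s.length := by
          apply Finset.sum_le_sum
          intro i _
          calc (P' i).card ≤ (Finset.range s.length).card := by
                apply Finset.card_le_card
                intro x hx
                have := (hP'.1 i).1 x hx
                exact Finset.mem_range.mpr (by omega)
            _ = s.length := Finset.card_range _
      _ = k * s.length := by simp [Finset.sum_const, mul_comm]
  · exact ⟨P, hP, rfl⟩

lemma main_step (s u : List α) (hg : GreedyStep s u) (k : ℕ)
    (P : Fin (k+1) → Finset ℕ) (hP : IsKPacking s (k+1) P) :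
    ∑ i, (P i).card ≤ 3 * (s.length - u.length) + Pk u k := by
  classical
  obtain ⟨⟨a, b, c, hc, hu⟩, hmin⟩ := hg
  obtain ⟨hpp, hdisj⟩ := hP
  set L := gstarts a b s with hLdef
  have hlen : (replace a b c s).length + L.length = s.length := length_replace a b c s
  have hN : L.Nodup := gstarts_nodup a b s
  set M : Finset ℕ := L.toFinset with hMdef
  have hMcard : M.card = L.length := List.toFinset_card_of_nodup hN
  have hgain : s.length - u.length = L.length := by rw [hu]; omega
  set cb : ℕ → ℕ := fun i => (M.filter (· < i)).card with hcb
  set φ : ℕ → ℕ := fun i => i - cb i with hφ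
  have hcb_le : ∀ i, cb i ≤ i := by
    intro i
    calc cb i ≤ (Finset.range i).card := by
          apply Finset.card_le_card
          intro p hp
          exact Finset.mem_range.mpr (Finset.mem_filter.mp hp).2
      _ = i := Finset.card_range i
  have hcb_mono : ∀ i j, i ≤ j → cb i ≤ cb j := by
    intro i j hij
    apply Finset.card_le_card
    intro p hp
    rw [Finset.mem_filter] at hp ⊢
    exact ⟨hp.1, by omega⟩
  have hcb_gap : ∀ i j, i ∉ M → cb j ≤ cb i + (j - i - 1) := by
    intro i j hi
    rcases le_or_gt j i with hle | hlt
    · have := hcb_mono j i hle; omega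
    calc cb j ≤ (M.filter (· < i) ∪ Finset.Ico (i+1) j).card := by
          apply Finset.card_le_card
          intro p hp
          rw [Finset.mem_filter] at hp
          rw [Finset.mem_union, Finset.mem_filter, Finset.mem_Ico]
          rcases Nat.lt_or_ge p i with h | h
          · exact Or.inl ⟨hp.1, h⟩
          · have : p ≠ i := fun he => hi (he ▸ hp.1)
            exact Or.inr ⟨by omega, hp.2⟩
      _ ≤ cb i + (Finset.Ico (i+1) j).card := Finset.card_union_le _ _
      _ ≤ cb i + (j - i - 1) := by rw [Nat.card_Ico]; omega
  have hcb_gap2 : ∀ i j, i ∉ M → (i+1) ∉ M → (∀ p ∈ M, p + 1 ≠ j) →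
      cb j ≤ cb i + (j - i - 2) := by
    intro i j hi hi1 hpj
    rcases le_or_gt j i with hle | hlt
    · have := hcb_mono j i hle; omega
    calc cb j ≤ (M.filter (· < i) ∪ Finset.Ico (i+2) (j-1)).card := by
          apply Finset.card_le_card
          intro p hp
          rw [Finset.mem_filter] at hp
          rw [Finset.mem_union, Finset.mem_filter, Finset.mem_Ico]
          rcases Nat.lt_or_ge p i with h | h
          · exact Or.inl ⟨hp.1, h⟩
          · have h1 : p ≠ i := fun he => hi (he ▸ hp.1)
            have h2 : p ≠ i + 1 := fun he => hi1 (he ▸ hp.1)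
            have h3 : p + 1 ≠ j := hpj p hp.1
            exact Or.inr ⟨by omega, by omega⟩
      _ ≤ cb i + (Finset.Ico (i+2) (j-1)).card := Finset.card_union_le _ _
      _ ≤ cb i + (j - i - 2) := by rw [Nat.card_Ico]; omega
  have hφ_mono : ∀ i j, i < j → i ∉ M → φ i < φ j := by
    intro i j h1 h2
    have g1 := hcb_gap i j h2
    have g2 := hcb_le i
    have g3 := hcb_mono i j (le_of_lt h1)
    simp only [hφ]
    omega
  have hφ_dist : ∀ i j, i + 2 ≤ j → i ∉ M → (i+1) ∉ M → (∀ p ∈ M, p + 1 ≠ j) →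
      φ i + 2 ≤ φ j := by
    intro i j h1 h2 h3 h4
    have g1 := hcb_gap2 i j h2 h3 h4
    have g2 := hcb_le i
    have g3 := hcb_mono i j (by omega)
    simp only [hφ]
    omega
  have hbridge : ∀ i, L.countP (fun p => decide (p < i)) = cb i := by
    intro i
    rw [countP_eq_card_filter_toFinset L hN]
    simp only [hcb, hMdef]
    congr 1
    apply Finset.filter_congr
    intro x _
    simp
  have hget : ∀ i, i ∉ M → (∀ p ∈ M, p + 1 ≠ i) → u[φ i]? = s[i]? := by
    intro i h1 h2
    have h1' : i ∉ L := fun h => h1 (List.mem_toFinset.mpr h)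
    have h2' : ∀ p ∈ L, p + 1 ≠ i := fun p hp => h2 p (List.mem_toFinset.mpr hp)
    have := replace_getElem? a b c s i h1' h2'
    rw [hbridge] at this
    rw [hu]
    exact this
  set Ok : ℕ → Prop := fun i => i ∉ M ∧ (i+1) ∉ M ∧ ∀ p ∈ M, p + 1 ≠ i with hOk
  have hOk_def : ∀ i, Ok i ↔ (i ∉ M ∧ (i+1) ∉ M ∧ ∀ p ∈ M, p + 1 ≠ i) := fun i => Iff.rfl
  have hsurv : ∀ (N : Finset ℕ) (a' b' : α), (∀ i ∈ N, s[i]? = some a' ∧ s[i+1]? = some b') →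
      ∀ i ∈ N.filter Ok, u[φ i]? = some a' ∧ u[φ i + 1]? = some b' := by
    intro N a' b' hocc i hi
    obtain ⟨hiN, hOk1, hOk2, hOk3⟩ := Finset.mem_filter.mp hi
    constructor
    · rw [hget i hOk1 hOk3]
      exact (hocc i hiN).1
    · have hstep : φ (i+1) = φ i + 1 := by
        have hcbeq : cb (i+1) = cb i := by
          have := hcb_gap i (i+1) hOk1
          have := hcb_mono i (i+1) (by omega)
          omega
        simp only [hφ, hcbeq]
        have := hcb_le i
        omega
      have hOk3' : ∀ p ∈ M, p + 1 ≠ i + 1 := by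
        intro p hp he
        have hpi : p = i := by omega
        exact hOk1 (hpi ▸ hp)
      rw [← hstep, hget (i+1) hOk2 hOk3']
      exact (hocc i hiN).2
  -- main packing transport
  have key : ∀ i0 : Fin (k+1),
      ∑ j : Fin k, ((P (i0.succAbove j)).filter Ok).card ≤ Pk u k := by
    intro i0
    set Q : Fin k → Finset ℕ := fun j => ((P (i0.succAbove j)).filter Ok).image φ with hQ
    have hOkmem : ∀ (j : Fin k) (x : ℕ), x ∈ (P (i0.succAbove j)).filter Ok →
        x ∈ P (i0.succAbove j) ∧ x ∉ M ∧ (x+1) ∉ M ∧ ∀ p ∈ M, p + 1 ≠ x := by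
      intro j x hx
      obtain ⟨h1, h2⟩ := Finset.mem_filter.mp hx
      exact ⟨h1, h2⟩
    have hinj : ∀ (j : Fin k), Set.InjOn φ ((P (i0.succAbove j)).filter Ok : Set ℕ) := by
      intro j x hx y hy hxy
      by_contra hne
      have hxOk := hOkmem j x hx
      have hyOk := hOkmem j y hy
      rcases lt_trichotomy x y with h | h | h
      · exact absurd hxy (Nat.ne_of_lt (hφ_mono x y h hxOk.2.1))
      · exact hne h
      · exact absurd hxy.symm (Nat.ne_of_lt (hφ_mono y x h hyOk.2.1))
    have hcardQ : ∀ j, (Q j).card = ((P (i0.succAbove j)).filter Ok).card := by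
      intro j
      exact Finset.card_image_of_injOn (hinj j)
    have hKP : IsKPacking u k Q := by
      constructor
      · intro j
        obtain ⟨hb', hd', a', b', hocc'⟩ := hpp (i0.succAbove j)
        have hs := hsurv (P (i0.succAbove j)) a' b' hocc'
        refine ⟨?_, ?_, a', b', ?_⟩
        · intro y hy
          obtain ⟨x, hx, rfl⟩ := Finset.mem_image.mp hy
          have h2 := (hs x hx).2
          obtain ⟨hlt, -⟩ := List.getElem?_eq_some_iff.mp h2
          exact hlt
        · intro y1 hy1 y2 hy2 hne
          obtain ⟨x1, hx1, rfl⟩ := Finset.mem_image.mp hy1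
          obtain ⟨x2, hx2, rfl⟩ := Finset.mem_image.mp hy2
          have hx1' := hOkmem j x1 hx1
          have hx2' := hOkmem j x2 hx2
          have hxne : x1 ≠ x2 := fun he => hne (he ▸ rfl)
          have hdd := hd' x1 hx1'.1 x2 hx2'.1 hxne
          simp only [Nat.dist] at hdd ⊢
          rcases lt_trichotomy x1 x2 with h | h | h
          · have := hφ_dist x1 x2 (by omega) hx1'.2.1 hx1'.2.2.1 hx2'.2.2.2
            omega
          · exact absurd h hxne
          · have := hφ_dist x2 x1 (by omega) hx2'.2.1 hx2'.2.2.1 hx1'.2.2.2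
            omega
        · intro y hy
          obtain ⟨x, hx, rfl⟩ := Finset.mem_image.mp hy
          exact hs x hx
      · intro j1 j2 hne
        rw [Finset.disjoint_left]
        intro y hy1 hy2
        obtain ⟨x1, hx1, rfl⟩ := Finset.mem_image.mp hy1
        obtain ⟨x2, hx2, hx21⟩ := Finset.mem_image.mp hy2
        have hx1' := hOkmem j1 x1 hx1
        have hx2' := hOkmem j2 x2 hx2
        have hx12 : x2 = x1 := by
          by_contra hne'
          rcases lt_trichotomy x2 x1 with h | h | h
          · exact absurd hx21 (Nat.ne_of_lt (hφ_mono x2 x1 h hx2'.2.1))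
          · exact hne' h
          · exact absurd hx21.symm (Nat.ne_of_lt (hφ_mono x1 x2 h hx1'.2.1))
        subst hx12
        have hσ : i0.succAbove j1 ≠ i0.succAbove j2 :=
          fun he => hne (Fin.succAbove_right_injective he)
        exact Finset.disjoint_left.mp (hdisj _ _ hσ) hx1'.1 hx2'.1
    calc ∑ j : Fin k, ((P (i0.succAbove j)).filter Ok).card
        = ∑ j, (Q j).card := Finset.sum_congr rfl (fun j _ => (hcardQ j).symm)
      _ ≤ Pk u k := le_Pk u k Q hKP
  rw [hgain]
  have hcover_mem : ∀ x : ℕ, s[x]? = some a → s[x+1]? = some b →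
      x ∈ M.biUnion (fun p => {p-1, p, p+1}) := by
    intro x hxa hxb
    rcases gstarts_cover hxa hxb with hm | ⟨p, hp, rfl⟩
    · exact Finset.mem_biUnion.mpr ⟨x, List.mem_toFinset.mpr hm, by simp⟩
    · exact Finset.mem_biUnion.mpr ⟨p, List.mem_toFinset.mpr hp, by simp⟩
  have hD3card : (M.biUnion (fun p => ({p-1, p, p+1} : Finset ℕ))).card ≤ 3 * L.length := by
    calc (M.biUnion (fun p => ({p-1, p, p+1} : Finset ℕ))).card
        ≤ ∑ p ∈ M, ({p-1, p, p+1} : Finset ℕ).card := Finset.card_biUnion_le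
      _ ≤ ∑ _p ∈ M, 3 := by
          apply Finset.sum_le_sum
          intro p _
          apply le_trans (Finset.card_insert_le _ _)
          apply Nat.succ_le_succ
          apply le_trans (Finset.card_insert_le _ _)
          simp
      _ = 3 * L.length := by rw [Finset.sum_const, hMcard, smul_eq_mul]; omega
  have hD2card : (M.biUnion (fun p => ({p-1, p+1} : Finset ℕ))).card ≤ 2 * L.length := by
    calc (M.biUnion (fun p => ({p-1, p+1} : Finset ℕ))).card
        ≤ ∑ p ∈ M, ({p-1, p+1} : Finset ℕ).card := Finset.card_biUnion_le
      _ ≤ ∑ _p ∈ M, 2 := by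
          apply Finset.sum_le_sum
          intro p _
          apply le_trans (Finset.card_insert_le _ _)
          simp
      _ = 2 * L.length := by rw [Finset.sum_const, hMcard, smul_eq_mul]; omega
  have hsplit : ∀ i, (P i).card =
      ((P i).filter Ok).card + ((P i).filter (fun z => ¬ Ok z)).card :=
    fun i => (Finset.card_filter_add_card_filter_not Ok).symm
  by_cases hcase : ∃ i1 : Fin (k+1), ∃ x1 ∈ P i1, s[x1]? = some a ∧ s[x1+1]? = some b
  · -- some packing uses the pair (a, b); drop it, all its elements are near M
    obtain ⟨i0, x1, hx1, hxa, hxb⟩ := hcase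
    set T : Fin (k+1) → Finset ℕ :=
      fun i => if i = i0 then P i0 else (P i).filter (fun z => ¬ Ok z) with hT
    have hTsub : ∀ i, T i ⊆ P i := by
      intro i
      simp only [hT]
      split
      · rename_i he; rw [he]
      · exact Finset.filter_subset _ _
    have hTD : ∀ i, ∀ x ∈ T i, x ∈ M.biUnion (fun p => ({p-1, p, p+1} : Finset ℕ)) := by
      intro i x hx
      by_cases hi : i = i0
      · have hx' : x ∈ P i0 := by
          rw [hT] at hx
          simpa [hi] using hx
        obtain ⟨hb0, hd0, a0, b0, hocc0⟩ := hpp i0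
        obtain ⟨ha0, hb0'⟩ := hocc0 x1 hx1
        have ha : a0 = a := by rw [hxa] at ha0; exact (Option.some_inj.mp ha0).symm
        have hbb : b0 = b := by rw [hxb] at hb0'; exact (Option.some_inj.mp hb0').symm
        obtain ⟨hxa', hxb'⟩ := hocc0 x hx'
        exact hcover_mem x (ha ▸ hxa') (hbb ▸ hxb')
      · rw [hT] at hx
        simp only [if_neg hi] at hx
        obtain ⟨hxP, hnOk⟩ := Finset.mem_filter.mp hx
        by_cases h1 : x ∈ M
        · exact Finset.mem_biUnion.mpr ⟨x, h1, by simp⟩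
        by_cases h2 : x + 1 ∈ M
        · exact Finset.mem_biUnion.mpr ⟨x+1, h2, by simp⟩
        have h3 : ∃ p ∈ M, p + 1 = x := by
          by_contra h3
          push_neg at h3
          exact hnOk ⟨h1, h2, fun p hp => h3 p hp⟩
        obtain ⟨p, hp, rfl⟩ := h3
        exact Finset.mem_biUnion.mpr ⟨p, hp, by simp⟩
    have hTdisj : ∀ i ∈ (Finset.univ : Finset (Fin (k+1))), ∀ j ∈ Finset.univ, i ≠ j →
        Disjoint (T i) (T j) := by
      intro i _ j _ hij
      exact Finset.disjoint_of_subset_left (hTsub i)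
        (Finset.disjoint_of_subset_right (hTsub j) (hdisj i j hij))
    have hTsum : ∑ i, (T i).card ≤ 3 * L.length := by
      rw [← Finset.card_biUnion hTdisj]
      refine le_trans (Finset.card_le_card ?_) hD3card
      intro x hx
      obtain ⟨i, _, hxi⟩ := Finset.mem_biUnion.mp hx
      exact hTD i x hxi
    have hsum1 : ∑ i, (P i).card = (P i0).card + ∑ j : Fin k, (P (i0.succAbove j)).card :=
      Fin.sum_univ_succAbove _ i0
    have hsum2 : ∑ i, (T i).card = (T i0).card + ∑ j : Fin k, (T (i0.succAbove j)).card :=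
      Fin.sum_univ_succAbove _ i0
    have hTi0 : (T i0).card = (P i0).card := by rw [hT]; simp
    have hTj : ∀ j : Fin k, (T (i0.succAbove j)).card =
        ((P (i0.succAbove j)).filter (fun z => ¬ Ok z)).card := by
      intro j
      rw [hT]
      simp only [if_neg (Fin.succAbove_ne i0 j)]
    have hkey := key i0
    have hsplit' : ∑ j : Fin k, (P (i0.succAbove j)).card =
        ∑ j : Fin k, ((P (i0.succAbove j)).filter Ok).card +
        ∑ j : Fin k, ((P (i0.succAbove j)).filter (fun z => ¬ Ok z)).card := by
      rw [← Finset.sum_add_distrib]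
      exact Finset.sum_congr rfl (fun j _ => hsplit _)
    have hTsum' : ∑ j : Fin k, (T (i0.succAbove j)).card =
        ∑ j : Fin k, ((P (i0.succAbove j)).filter (fun z => ¬ Ok z)).card :=
      Finset.sum_congr rfl (fun j _ => hTj j)
    omega
  · -- no packing uses the pair (a, b)
    push_neg at hcase
    set i0 : Fin (k+1) := 0 with hi0
    have hP0 : (P i0).card ≤ L.length := by
      have := pairPacking_card_le_gain ⟨⟨a, b, c, hc, hu⟩, hmin⟩ (hpp i0)
      have h4 : u.length + L.length = s.length := by rw [hu]; omega
      omega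
    have hbadD : ∀ j : Fin k, ∀ x ∈ (P (i0.succAbove j)).filter (fun z => ¬ Ok z),
        x ∈ M.biUnion (fun p => ({p-1, p+1} : Finset ℕ)) := by
      intro j x hx
      obtain ⟨hxP, hnOk⟩ := Finset.mem_filter.mp hx
      by_cases h1 : x ∈ M
      · exfalso
        have hocc := mem_gstarts (List.mem_toFinset.mp h1)
        exact hcase (i0.succAbove j) x hxP hocc.1 hocc.2
      by_cases h2 : x + 1 ∈ M
      · exact Finset.mem_biUnion.mpr ⟨x+1, h2, by simp⟩
      have h3 : ∃ p ∈ M, p + 1 = x := by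
        by_contra h3
        push_neg at h3
        exact hnOk ⟨h1, h2, fun p hp => h3 p hp⟩
      obtain ⟨p, hp, rfl⟩ := h3
      exact Finset.mem_biUnion.mpr ⟨p, hp, by simp⟩
    have hbaddisj : ∀ j1 ∈ (Finset.univ : Finset (Fin k)), ∀ j2 ∈ Finset.univ, j1 ≠ j2 →
        Disjoint ((P (i0.succAbove j1)).filter (fun z => ¬ Ok z))
          ((P (i0.succAbove j2)).filter (fun z => ¬ Ok z)) := by
      intro j1 _ j2 _ hne
      have hσ : i0.succAbove j1 ≠ i0.succAbove j2 :=
        fun he => hne (Fin.succAbove_right_injective he)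
      exact Finset.disjoint_of_subset_left (Finset.filter_subset _ _)
        (Finset.disjoint_of_subset_right (Finset.filter_subset _ _) (hdisj _ _ hσ))
    have hbadsum : ∑ j : Fin k, ((P (i0.succAbove j)).filter (fun z => ¬ Ok z)).card
        ≤ 2 * L.length := by
      rw [← Finset.card_biUnion hbaddisj]
      refine le_trans (Finset.card_le_card ?_) hD2card
      intro x hx
      obtain ⟨j, _, hxj⟩ := Finset.mem_biUnion.mp hx
      exact hbadD j x hxj
    have hkey := key i0
    have hsum1 : ∑ i, (P i).card = (P i0).card + ∑ j : Fin k, (P (i0.succAbove j)).card :=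
      Fin.sum_univ_succAbove _ i0
    have hsplit' : ∑ j : Fin k, (P (i0.succAbove j)).card =
        ∑ j : Fin k, ((P (i0.succAbove j)).filter Ok).card +
        ∑ j : Fin k, ((P (i0.succAbove j)).filter (fun z => ¬ Ok z)).card := by
      rw [← Finset.sum_add_distrib]
      exact Finset.sum_congr rfl (fun j _ => hsplit _)
    omega

end BPEMain
/-- any run of BPE with `k` rounds has utility at least `P_k(s)/3`. -/
theorem stmt6 {α : Type*} [DecidableEq α] (s t : List α) (k : ℕ)
    (h : GreedyReach k s t) :
    Pk s k ≤ 3 * (s.length - t.length) := by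
  induction k generalizing s with
  | zero =>
    apply csSup_le'
    rintro n ⟨P, _, rfl⟩
    simp
  | succ k ih =>
    obtain ⟨u, hg, hr⟩ := h
    have hul : u.length ≤ s.length := by
      obtain ⟨a, b, c, hc, hu⟩ := hg.1
      have := length_replace a b c s
      rw [hu]
      omega
    have htl : t.length ≤ u.length := greedyReach_length_le k u t hr
    have h1 : Pk s (k+1) ≤ 3 * (s.length - u.length) + Pk u k := by
      apply csSup_le'
      rintro n ⟨P, hP, rfl⟩
      exact main_step s u hg k P hP
    have h2 : Pk u k ≤ 3 * (u.length - t.length) := ih u hr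
    omega
end

section
/- There exists a family of instances on which BPE achieves at most a 0.625 fraction of the optimal full-merge utility: for every t ≥ 1, letting s_t be the concatenation of t copies of the string 'abaacaaba#_j' (each #_j a distinct fresh separator symbol) followed by 'aa', any run of BPE with k = 4 merge rounds (regardless of tie-breaking) achieves utility at most 5t + 1, while OPT^m(s_t, 4) ≥ 8t. -/
variable {α : Type*} [DecidableEq α]

/-- The string family: `t` copies of `abaacaaba |ⱼ aca #ⱼ` (with distinct
separator symbols), followed by `aa`.  Here `a = 0`, `b = 1`, `c = 2`,
and the separators are `3 + 2*j` and `4 + 2*j`. -/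
def sUB (t : ℕ) : List ℕ :=
  (List.range t).flatMap
    (fun j => [0, 1, 0, 0, 2, 0, 0, 1, 0, 3 + 2 * j, 0, 2, 0, 4 + 2 * j]) ++ [0, 0]

/-! ### Auxiliary machinery -/

section Aux
variable {α : Type*} [DecidableEq α]

/-- Number of (possibly overlapping) adjacent occurrences of the pair `ab`. -/
def cnt : List α → α → α → ℕ
  | x :: y :: r, a, b => (if x = a ∧ y = b then 1 else 0) + cnt (y :: r) a b
  | _, _, _ => 0

@[simp] lemma cnt_nil (a b : α) : cnt [] a b = 0 := rfl
@[simp] lemma cnt_single (x a b : α) : cnt [x] a b = 0 := rfl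
lemma cnt_cons₂ (x y : α) (r : List α) (a b : α) :
    cnt (x :: y :: r) a b = (if x = a ∧ y = b then 1 else 0) + cnt (y :: r) a b := rfl

lemma cnt_cons_le (x : α) (L : List α) (a b : α) : cnt L a b ≤ cnt (x :: L) a b := by
  cases L with
  | nil => simp
  | cons y r => rw [cnt_cons₂]; omega

lemma cnt_cons_ne (u : α) (L : List α) {a : α} (h : u ≠ a) (b : α) :
    cnt (u :: L) a b = cnt L a b := by
  cases L with
  | nil => simp
  | cons y r => rw [cnt_cons₂]; simp [h]

lemma cnt_concat : ∀ (L : List α) (u x a b : α),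
    cnt ((u :: L) ++ [x]) a b
      = cnt (u :: L) a b + (if L.getLastD u = a ∧ x = b then 1 else 0)
  | [], u, x, a, b => by simp [cnt_cons₂]
  | v :: M, u, x, a, b => by
      have e1 : cnt ((u :: v :: M) ++ [x]) a b
          = (if u = a ∧ v = b then 1 else 0) + cnt ((v :: M) ++ [x]) a b := rfl
      rw [e1, cnt_concat M v x a b, cnt_cons₂, List.getLastD_cons]
      omega

lemma cnt_overlap : ∀ (L : List α) (m : α) (M : List α) (a b : α),
    cnt (L ++ m :: M) a b = cnt (L ++ [m]) a b + cnt (m :: M) a b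
  | [], m, M, a, b => by simp
  | [x], m, M, a, b => by
      rw [show ([x] ++ m :: M) = x :: m :: M from rfl, cnt_cons₂]
      rw [show ([x] ++ [m]) = [x, m] from rfl, cnt_cons₂]
      simp
  | x :: y :: L', m, M, a, b => by
      have ih := cnt_overlap (y :: L') m M a b
      have e1 : cnt ((x :: y :: L') ++ m :: M) a b
          = (if x = a ∧ y = b then 1 else 0) + cnt ((y :: L') ++ m :: M) a b := rfl
      have e2 : cnt ((x :: y :: L') ++ [m]) a b
          = (if x = a ∧ y = b then 1 else 0) + cnt ((y :: L') ++ [m]) a b := rfl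
      rw [e1, e2, ih]; omega

lemma cnt_eq_zero_of_not_mem : ∀ (L : List α) (a b : α),
    (a, b) ∉ L.zip L.tail → cnt L a b = 0
  | [], _, _, _ => rfl
  | [x], _, _, _ => rfl
  | x :: y :: r, a, b, h => by
      simp only [List.tail_cons, List.zip_cons_cons, List.mem_cons, not_or] at h
      rw [cnt_cons₂, cnt_eq_zero_of_not_mem (y :: r) a b (by simpa using h.2)]
      have : ¬ (x = a ∧ y = b) := by
        rintro ⟨rfl, rfl⟩; exact h.1 rfl
      simp [this]

lemma cnt_le_one_of_nodup : ∀ (L : List α), (L.zip L.tail).Nodup → ∀ a b, cnt L a b ≤ 1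
  | [], _, _, _ => by simp
  | [x], _, _, _ => by simp
  | x :: y :: r, h, a, b => by
      simp only [List.tail_cons, List.zip_cons_cons, List.nodup_cons] at h
      rw [cnt_cons₂]
      by_cases hxy : x = a ∧ y = b
      · obtain ⟨rfl, rfl⟩ := hxy
        rw [cnt_eq_zero_of_not_mem (y :: r) x y (by simpa using h.1)]
        simp
      · simp only [hxy, if_false]
        simpa using cnt_le_one_of_nodup (y :: r) h.2 a b

lemma length_le_replace (a b c : α) :
    ∀ s : List α, s.length ≤ (replace a b c s).length + cnt s a b
  | [] => by simp [replace]
  | [x] => by simp [replace]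
  | x :: y :: r => by
      rw [replace]
      by_cases h : x = a ∧ y = b
      · rw [if_pos h, cnt_cons₂, if_pos h]
        have ih := length_le_replace a b c r
        have h2 := cnt_cons_le y r a b
        simp only [List.length_cons]
        omega
      · rw [if_neg h, cnt_cons₂, if_neg h]
        have ih := length_le_replace a b c (y :: r)
        have e : (y :: r).length = r.length + 1 := rfl
        simp only [List.length_cons]
        omega

lemma count_c_replace (a b c : α) :
    ∀ s : List α, (replace a b c s).count c ≤ cnt s a b + s.count c
  | [] => by simp [replace]
  | [x] => by simp [replace]
  | x :: y :: r => by
      rw [replace]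
      by_cases h : x = a ∧ y = b
      · rw [if_pos h, cnt_cons₂, if_pos h]
        have ih := count_c_replace a b c r
        have h2 := cnt_cons_le y r a b
        simp only [List.count_cons, beq_iff_eq]
        split_ifs <;> omega
      · rw [if_neg h, cnt_cons₂, if_neg h]
        have ih := count_c_replace a b c (y :: r)
        simp only [List.count_cons, beq_iff_eq] at *
        split_ifs at * <;> omega

lemma replace_head (u : α) (L : List α) (a b c : α) :
    ∃ M, replace a b c (u :: L) = u :: M ∨ replace a b c (u :: L) = c :: M := by
  cases L with
  | nil => exact ⟨[], Or.inl rfl⟩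
  | cons v r =>
      rw [replace]
      by_cases h : u = a ∧ v = b
      · rw [if_pos h]; exact ⟨_, Or.inr rfl⟩
      · rw [if_neg h]; exact ⟨_, Or.inl rfl⟩

lemma cnt_replace_le (a b c x y : α) (hx : x ≠ c) (hy : y ≠ c) :
    ∀ s : List α, cnt (replace a b c s) x y ≤ cnt s x y
  | [] => by simp [replace]
  | [u] => by simp [replace]
  | u :: v :: r => by
      rw [replace]
      by_cases h : u = a ∧ v = b
      · rw [if_pos h]
        have ih := cnt_replace_le a b c x y hx hy r
        rw [cnt_cons_ne c _ (fun hc => hx hc.symm)]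
        have h2 := cnt_cons_le v r x y
        have h3 := cnt_cons_le u (v :: r) x y
        omega
      · rw [if_neg h]
        obtain ⟨M, hM | hM⟩ := replace_head v r a b c
        · rw [hM]
          have ih := cnt_replace_le a b c x y hx hy (v :: r)
          rw [hM] at ih
          rw [cnt_cons₂ u v M, cnt_cons₂ u v r]
          omega
        · rw [hM]
          have ih := cnt_replace_le a b c x y hx hy (v :: r)
          rw [hM] at ih
          have e : cnt (u :: c :: M) x y = cnt (c :: M) x y := by
            rw [cnt_cons₂]
            have : ¬ (u = x ∧ c = y) := fun hc => hy hc.2.symm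
            simp [this]
          rw [e, cnt_cons₂]
          omega

lemma cnt_le_count_tail : ∀ (L : List α) (a b : α), cnt L a b ≤ L.tail.count b
  | [], _, _ => le_refl _
  | [x], _, _ => by simp
  | x :: y :: r, a, b => by
      have ih := cnt_le_count_tail (y :: r) a b
      rw [cnt_cons₂]
      simp only [List.tail_cons, List.count_cons, beq_iff_eq] at *
      split_ifs at * <;> simp_all <;> omega

lemma cnt_le_count_dropLast : ∀ (L : List α) (a b : α), cnt L a b ≤ L.dropLast.count a
  | [], _, _ => le_refl _
  | [x], _, _ => by simp
  | x :: y :: r, a, b => by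
      have ih := cnt_le_count_dropLast (y :: r) a b
      rw [cnt_cons₂]
      rw [show (x :: y :: r).dropLast = x :: (y :: r).dropLast from rfl]
      simp only [List.count_cons, beq_iff_eq] at *
      split_ifs at * <;> simp_all <;> omega

lemma cnt_le_count_fst (L : List α) (a b : α) : cnt L a b ≤ L.count a :=
  (cnt_le_count_dropLast L a b).trans (List.Sublist.count_le a (List.dropLast_sublist L))

lemma cnt_le_count_snd (L : List α) (a b : α) : cnt L a b ≤ L.count b :=
  (cnt_le_count_tail L a b).trans (List.Sublist.count_le b (List.tail_sublist L))

lemma cnt_preserve (a b c : α) (s : List α) (N : ℕ) (hc : c ∉ s)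
    (H : ∀ x y, cnt s x y ≤ N) : ∀ x y, cnt (replace a b c s) x y ≤ N := by
  intro x y
  have hcc : s.count c = 0 := List.count_eq_zero_of_not_mem hc
  by_cases hx : x = c
  · subst hx
    calc cnt (replace a b x s) x y ≤ (replace a b x s).count x := cnt_le_count_fst _ _ _
    _ ≤ cnt s a b + s.count x := count_c_replace a b x s
    _ ≤ N := by rw [hcc]; simpa using H a b
  · by_cases hy : y = c
    · subst hy
      calc cnt (replace a b y s) x y ≤ (replace a b y s).count y := cnt_le_count_snd _ _ _
      _ ≤ cnt s a b + s.count y := count_c_replace a b y s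
      _ ≤ N := by rw [hcc]; simpa using H a b
    · exact (cnt_replace_le a b c x y hx hy s).trans (H x y)

lemma fullstep_facts {s u : List α} (N : ℕ) (h : FullStep s u) (H : ∀ x y, cnt s x y ≤ N) :
    s.length ≤ u.length + N ∧ ∀ x y, cnt u x y ≤ N := by
  obtain ⟨a, b, c, hc, rfl⟩ := h
  exact ⟨(length_le_replace a b c s).trans (by have := H a b; omega),
    cnt_preserve a b c s N hc H⟩

lemma replace_eq_cons₂ (a b c x y : α) (r : List α) :
    replace a b c (x :: y :: r)
      = if x = a ∧ y = b then c :: replace a b c r else x :: replace a b c (y :: r) := rfl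

lemma replace_append (a b c : α) :
    ∀ (L M : List α), L.getLastD a ≠ a →
      replace a b c (L ++ M) = replace a b c L ++ replace a b c M
  | [], M, h => absurd rfl h
  | [x], M, h => by
      have hx : x ≠ a := by simpa using h
      cases M with
      | nil => simp [replace]
      | cons m M' =>
          rw [show ([x] ++ m :: M') = x :: m :: M' from rfl, replace_eq_cons₂,
            if_neg (fun hc => hx hc.1)]
          rfl
  | x :: y :: L', M, h => by
      have h' : (y :: L').getLastD a ≠ a := by
        simp only [List.getLastD_cons] at h ⊢; exact h
      rw [show ((x :: y :: L') ++ M) = x :: y :: (L' ++ M) from rfl, replace_eq_cons₂,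
        replace_eq_cons₂ a b c x y L']
      by_cases hm : x = a ∧ y = b
      · rw [if_pos hm, if_pos hm]
        cases L' with
        | nil => rfl
        | cons w L'' =>
            have h'' : (w :: L'').getLastD a ≠ a := by
              simp only [List.getLastD_cons] at h' ⊢; exact h'
            show c :: replace a b c ((w :: L'') ++ M) = _
            rw [replace_append a b c (w :: L'') M h'']
            rfl
      · rw [if_neg hm, if_neg hm]
        show x :: replace a b c ((y :: L') ++ M) = _
        rw [replace_append a b c (y :: L') M h']
        rfl

lemma replace_flatMap (a b c : α) (f g : ℕ → List α) (C C' : List α)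
    (hC : replace a b c C = C') :
    ∀ l : List ℕ, (∀ j ∈ l, (f j).getLastD a ≠ a ∧ replace a b c (f j) = g j) →
      replace a b c (l.flatMap f ++ C) = l.flatMap g ++ C'
  | [], _ => by simpa using hC
  | j :: l', H => by
      rw [List.flatMap_cons, List.append_assoc,
        replace_append a b c (f j) _ (H j List.mem_cons_self).1,
        (H j List.mem_cons_self).2,
        replace_flatMap a b c f g C C' hC l' (fun j hj => H j (List.mem_cons_of_mem _ hj)),
        List.flatMap_cons, List.append_assoc]

lemma cnt_flat_le (f : ℕ → List α) (a b : α) (K : ℕ) :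
    ∀ (l : List ℕ) (C : List α), C ≠ [] →
      (∀ j ∈ l, ∀ x, cnt (f j ++ [x]) a b ≤ K) →
      cnt (l.flatMap f ++ C) a b ≤ K * l.length + cnt C a b
  | [], C, hC, H => by simp
  | j :: l', C, hC, H => by
      obtain ⟨m, M, hm⟩ : ∃ m M, l'.flatMap f ++ C = m :: M := by
        cases h : l'.flatMap f ++ C with
        | nil => exact absurd ((List.append_eq_nil_iff.mp h).2) hC
        | cons m M => exact ⟨m, M, rfl⟩
      rw [List.flatMap_cons, List.append_assoc, hm, cnt_overlap]
      have h1 := H j List.mem_cons_self m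
      have h2 := cnt_flat_le f a b K l' C hC (fun j hj x => H j (List.mem_cons_of_mem _ hj) x)
      rw [hm] at h2
      have e : K * (j :: l').length = K * l'.length + K := by
        rw [List.length_cons, Nat.mul_succ]
      omega

lemma length_flat (f : ℕ → List α) (k : ℕ) :
    ∀ l : List ℕ, (∀ j ∈ l, (f j).length = k) → (l.flatMap f).length = k * l.length
  | [], _ => by simp
  | j :: l', H => by
      rw [List.flatMap_cons, List.length_append, H j List.mem_cons_self,
        length_flat f k l' (fun j hj => H j (List.mem_cons_of_mem _ hj)),
        List.length_cons, Nat.mul_succ]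
      omega

end Aux

/-! ### Specific computations for the family `sUB` -/

/-- The basic block of `sUB`. -/
def blk (j : ℕ) : List ℕ := [0, 1, 0, 0, 2, 0, 0, 1, 0, 3 + 2 * j, 0, 2, 0, 4 + 2 * j]

/-- The block after the forced first greedy merge `00 → c`. -/
def blkU (c j : ℕ) : List ℕ := [0, 1, c, 2, c, 1, 0, 3 + 2 * j, 0, 2, 0, 4 + 2 * j]

lemma sUB_eq (t : ℕ) : sUB t = (List.range t).flatMap blk ++ [0, 0] := rfl

lemma sUB_length (t : ℕ) : (sUB t).length = 14 * t + 2 := by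
  rw [sUB_eq, List.length_append,
    length_flat blk 14 (List.range t) (fun j _ => rfl)]
  simp

lemma mem_sUB {t x : ℕ} (h : x ∈ sUB t) : x ≤ 2 + 2 * t := by
  rw [sUB_eq] at h
  rcases List.mem_append.mp h with h | h
  · obtain ⟨j, hj, hx⟩ := List.mem_flatMap.mp h
    rw [List.mem_range] at hj
    simp only [blk, List.mem_cons, List.not_mem_nil, or_false] at hx
    omega
  · simp only [List.mem_cons, List.not_mem_nil, or_false] at h
    omega

set_option maxHeartbeats 1000000 in
lemma cntB (s x a b : ℕ) (hs : 3 ≤ s) :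
    cnt ([0,1,0,0,2,0,0,1,0,s,0,2,0,s+1] ++ [x]) a b ≤ 2 := by
  have hconc := cnt_concat [1,0,0,2,0,0,1,0,s,0,2,0,s+1] 0 x a b
  rw [show ([1,0,0,2,0,0,1,0,s,0,2,0,s+1] : List ℕ).getLastD 0 = s+1 from rfl] at hconc
  by_cases ha : a = s + 1
  · have h1 := cnt_le_count_dropLast [0,1,0,0,2,0,0,1,0,s,0,2,0,s+1] a b
    rw [show ([0,1,0,0,2,0,0,1,0,s,0,2,0,s+1] : List ℕ).dropLast
        = [0,1,0,0,2,0,0,1,0,s,0,2,0] from rfl] at h1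
    have h0 : List.count a [0,1,0,0,2,0,0,1,0,s,0,2,0] = 0 := by
      simp only [List.count_cons, List.count_nil, beq_iff_eq]
      split_ifs <;> omega
    have hind : (if s + 1 = a ∧ x = b then 1 else 0) ≤ 1 := by split_ifs <;> omega
    omega
  · have hne : ¬ (s + 1 = a ∧ x = b) := fun h => ha h.1.symm
    rw [if_neg hne] at hconc
    by_cases ha0 : a = 0
    · by_cases hb0 : b = 0
      · subst ha0; subst hb0
        have hs0 : ¬ (s = 0) := by omega
        have hs1 : ¬ (s + 1 = 0) := by omega
        have : cnt [0,1,0,0,2,0,0,1,0,s,0,2,0,s+1] 0 0 = 2 := by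
          simp [cnt_cons₂, hs0, hs1]
        omega
      · have h1 := cnt_le_count_tail [0,1,0,0,2,0,0,1,0,s,0,2,0,s+1] a b
        rw [show ([0,1,0,0,2,0,0,1,0,s,0,2,0,s+1] : List ℕ).tail
            = [1,0,0,2,0,0,1,0,s,0,2,0,s+1] from rfl] at h1
        have h2 : List.count b [1,0,0,2,0,0,1,0,s,0,2,0,s+1] ≤ 2 := by
          simp only [List.count_cons, List.count_nil, beq_iff_eq]
          split_ifs <;> omega
        omega
    · have h1 := cnt_le_count_dropLast [0,1,0,0,2,0,0,1,0,s,0,2,0,s+1] a b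
      rw [show ([0,1,0,0,2,0,0,1,0,s,0,2,0,s+1] : List ℕ).dropLast
          = [0,1,0,0,2,0,0,1,0,s,0,2,0] from rfl] at h1
      have h2 : List.count a [0,1,0,0,2,0,0,1,0,s,0,2,0] ≤ 2 := by
        simp only [List.count_cons, List.count_nil, beq_iff_eq]
        split_ifs <;> omega
      omega

set_option maxHeartbeats 1000000 in
lemma cntB' (s c x a b : ℕ) (hs : 3 ≤ s) (hc0 : c ≠ 0) (hc1 : c ≠ 1) (hc2 : c ≠ 2)
    (hcs : c ≠ s) (hcs1 : c ≠ s + 1) :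
    cnt ([0,1,c,2,c,1,0,s,0,2,0,s+1] ++ [x]) a b ≤ 1 := by
  apply cnt_le_one_of_nodup
  simp only [List.cons_append, List.nil_append, List.tail_cons, List.zip_cons_cons,
    List.zip_nil_right]
  simp only [List.nodup_cons, List.mem_cons, List.not_mem_nil, or_false, Prod.mk.injEq,
    not_or, List.nodup_nil, and_true, not_false_eq_true, true_and]
  omega

lemma cnt_sUB (t a b : ℕ) (hab : ¬ (a = 0 ∧ b = 0)) : cnt (sUB t) a b ≤ 2 * t := by
  rw [sUB_eq]
  have H : ∀ j ∈ List.range t, ∀ x, cnt (blk j ++ [x]) a b ≤ 2 := by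
    intro j _ x
    have e : blk j = [0,1,0,0,2,0,0,1,0,3+2*j,0,2,0,(3+2*j)+1] := by
      simp only [blk, List.cons.injEq, and_true, true_and]; omega
    rw [e]
    exact cntB (3 + 2 * j) x a b (by omega)
  have h := cnt_flat_le blk a b 2 (List.range t) [0, 0] (by simp) H
  have h2 : cnt [0, 0] a b = 0 := by
    have : ¬ ((0 : ℕ) = a ∧ (0 : ℕ) = b) := fun hc => hab ⟨hc.1.symm, hc.2.symm⟩
    rw [cnt_cons₂, if_neg this, cnt_single]
  rw [h2, List.length_range] at h
  omega

lemma replace_sUB_00 (t c : ℕ) :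
    replace 0 0 c (sUB t) = (List.range t).flatMap (blkU c) ++ [c] := by
  rw [sUB_eq]
  apply replace_flatMap 0 0 c blk (blkU c) [0, 0] [c] (by simp [replace])
  intro j _
  refine ⟨?_, ?_⟩
  · have e : (blk j).getLastD 0 = 4 + 2 * j := rfl
    rw [e]; omega
  · have h1 : ¬ (3 + 2 * j = 0) := by omega
    have h2 : ¬ (4 + 2 * j = 0) := by omega
    simp [blk, blkU, replace, h1, h2]

lemma cnt_u (t c a b : ℕ) (ht : 1 ≤ t) (hc : c ∉ sUB t) :
    cnt ((List.range t).flatMap (blkU c) ++ [c]) a b ≤ t := by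
  have hc0 : c ≠ 0 := fun h => hc (h ▸ (by
    rw [sUB_eq]; exact List.mem_append.mpr (Or.inr (by simp))))
  have hc1 : c ≠ 1 := fun h => hc (h ▸ (by
    rw [sUB_eq]
    exact List.mem_append.mpr (Or.inl (List.mem_flatMap.mpr
      ⟨0, List.mem_range.mpr ht, by simp [blk]⟩))))
  have hc2 : c ≠ 2 := fun h => hc (h ▸ (by
    rw [sUB_eq]
    exact List.mem_append.mpr (Or.inl (List.mem_flatMap.mpr
      ⟨0, List.mem_range.mpr ht, by simp [blk]⟩))))
  have H : ∀ j ∈ List.range t, ∀ x, cnt (blkU c j ++ [x]) a b ≤ 1 := by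
    intro j hj x
    rw [List.mem_range] at hj
    have hcs : c ≠ 3 + 2 * j := fun h => hc (h ▸ (by
      rw [sUB_eq]
      exact List.mem_append.mpr (Or.inl (List.mem_flatMap.mpr
        ⟨j, List.mem_range.mpr hj, by simp [blk]⟩))))
    have hcs1 : c ≠ 4 + 2 * j := fun h => hc (h ▸ (by
      rw [sUB_eq]
      exact List.mem_append.mpr (Or.inl (List.mem_flatMap.mpr
        ⟨j, List.mem_range.mpr hj, by simp [blk]⟩))))
    have e : blkU c j = [0,1,c,2,c,1,0,3+2*j,0,2,0,(3+2*j)+1] := by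
      simp only [blkU, List.cons.injEq, and_true, true_and]; omega
    rw [e]
    exact cntB' (3 + 2 * j) c x a b (by omega) hc0 hc1 hc2 hcs (by omega)
  have h := cnt_flat_le (blkU c) a b 1 (List.range t) [c] (by simp) H
  simp only [cnt_single, List.length_range] at h
  omega

/-! ### The four optimal merges -/

def blk1 (t j : ℕ) : List ℕ := [0,1,0,2*t+3,0,0,1,0,3+2*j,2*t+3,0,4+2*j]
def blk2 (t j : ℕ) : List ℕ := [0,1,0,2*t+4,0,1,0,3+2*j,2*t+4,4+2*j]
def blk3 (t j : ℕ) : List ℕ := [2*t+5,0,2*t+4,2*t+5,0,3+2*j,2*t+4,4+2*j]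
def blk4 (t j : ℕ) : List ℕ := [2*t+6,2*t+4,2*t+6,3+2*j,2*t+4,4+2*j]

lemma rep1 (t : ℕ) : replace 0 2 (2*t+3) (sUB t)
    = (List.range t).flatMap (blk1 t) ++ [0,0] := by
  rw [sUB_eq]
  apply replace_flatMap _ _ _ blk (blk1 t) _ _ (by simp [replace])
  intro j hj
  refine ⟨by rw [show (blk j).getLastD 0 = 4+2*j from rfl]; omega, ?_⟩
  have h1 : ¬(3+2*j = 2) := by omega
  have h2 : ¬(4+2*j = 2) := by omega
  simp [blk, blk1, replace, h1, h2]

lemma rep2 (t : ℕ) : replace (2*t+3) 0 (2*t+4) ((List.range t).flatMap (blk1 t) ++ [0,0])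
    = (List.range t).flatMap (blk2 t) ++ [0,0] := by
  have h0 : ¬((0:ℕ) = 2*t+3) := by omega
  apply replace_flatMap _ _ _ (blk1 t) (blk2 t) _ _ (by simp [replace, h0])
  intro j hj
  rw [List.mem_range] at hj
  refine ⟨by rw [show (blk1 t j).getLastD (2*t+3) = 4+2*j from rfl]; omega, ?_⟩
  have h1 : ¬((1:ℕ) = 2*t+3) := by omega
  have h2 : ¬(2*t+3 = 0) := by omega
  have h3 : ¬(3+2*j = 2*t+3) := by omega
  have h4 : ¬(3+2*j = 0) := by omega
  have h5 : ¬(4+2*j = 2*t+3) := by omega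
  simp [blk1, blk2, replace, h0, h1, h2, h3, h4, h5]

lemma rep3 (t : ℕ) : replace 0 1 (2*t+5) ((List.range t).flatMap (blk2 t) ++ [0,0])
    = (List.range t).flatMap (blk3 t) ++ [0,0] := by
  apply replace_flatMap _ _ _ (blk2 t) (blk3 t) _ _ (by simp [replace])
  intro j hj
  refine ⟨by rw [show (blk2 t j).getLastD 0 = 4+2*j from rfl]; omega, ?_⟩
  have h1 : ¬(2*t+4 = 1) := by omega
  have h2 : ¬(2*t+4 = 0) := by omega
  have h3 : ¬(3+2*j = 1) := by omega
  have h4 : ¬(3+2*j = 0) := by omega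
  have h5 : ¬(4+2*j = 1) := by omega
  simp [blk2, blk3, replace, h1, h2, h3, h4, h5]

lemma rep4 (t : ℕ) : replace (2*t+5) 0 (2*t+6) ((List.range t).flatMap (blk3 t) ++ [0,0])
    = (List.range t).flatMap (blk4 t) ++ [0,0] := by
  have h0 : ¬((0:ℕ) = 2*t+5) := by omega
  apply replace_flatMap _ _ _ (blk3 t) (blk4 t) _ _ (by simp [replace, h0])
  intro j hj
  rw [List.mem_range] at hj
  refine ⟨by rw [show (blk3 t j).getLastD (2*t+5) = 4+2*j from rfl]; omega, ?_⟩
  have h1 : ¬(2*t+4 = 2*t+5) := by omega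
  have h2 : ¬(2*t+5 = 0) := by omega
  have h3 : ¬(3+2*j = 2*t+5) := by omega
  have h4 : ¬(2*t+4 = 0) := by omega
  have h5 : ¬(4+2*j = 0) := by omega
  have h6 : ¬(3+2*j = 0) := by omega
  have h7 : ¬(4+2*j = 2*t+5) := by omega
  simp [blk3, blk4, replace, h0, h1, h2, h3, h4, h5, h6, h7]

lemma mem_w1 {t x : ℕ} (h : x ∈ (List.range t).flatMap (blk1 t) ++ [0,0]) : x ≤ 2*t+3 := by
  rcases List.mem_append.mp h with h | h
  · obtain ⟨j, hj, hx⟩ := List.mem_flatMap.mp h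
    rw [List.mem_range] at hj
    simp only [blk1, List.mem_cons, List.not_mem_nil, or_false] at hx
    omega
  · simp only [List.mem_cons, List.not_mem_nil, or_false] at h
    omega

lemma mem_w2 {t x : ℕ} (h : x ∈ (List.range t).flatMap (blk2 t) ++ [0,0]) : x ≤ 2*t+4 := by
  rcases List.mem_append.mp h with h | h
  · obtain ⟨j, hj, hx⟩ := List.mem_flatMap.mp h
    rw [List.mem_range] at hj
    simp only [blk2, List.mem_cons, List.not_mem_nil, or_false] at hx
    omega
  · simp only [List.mem_cons, List.not_mem_nil, or_false] at h
    omega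

lemma mem_w3 {t x : ℕ} (h : x ∈ (List.range t).flatMap (blk3 t) ++ [0,0]) : x ≤ 2*t+5 := by
  rcases List.mem_append.mp h with h | h
  · obtain ⟨j, hj, hx⟩ := List.mem_flatMap.mp h
    rw [List.mem_range] at hj
    simp only [blk3, List.mem_cons, List.not_mem_nil, or_false] at hx
    omega
  · simp only [List.mem_cons, List.not_mem_nil, or_false] at h
    omega

/-- on this family, every run of BPE with `k = 4` rounds achieves
utility at most `5t + 1`, while `OPT^m(s_t, 4) ≥ 8t`. -/
theorem stmt8 (t : ℕ) (ht : 1 ≤ t) :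
    (∀ t' : List ℕ, GreedyReach 4 (sUB t) t' → (sUB t).length - t'.length ≤ 5 * t + 1) ∧
    8 * t ≤ OPTm (sUB t) 4 := by
  have hslen := sUB_length t
  constructor
  · -- greedy upper bound
    intro t' h
    obtain ⟨u1, h1, u2, h2, u3, h3, u4, h4, h0⟩ := h
    -- round 1 is forced to merge the pair (0,0)
    have hfresh : (2*t+3) ∉ sUB t := fun hm => by have := mem_sUB hm; omega
    have hv : FullStep (sUB t) (replace 0 0 (2*t+3) (sUB t)) := ⟨0, 0, 2*t+3, hfresh, rfl⟩
    have hvlen : (replace 0 0 (2*t+3) (sUB t)).length = 12*t+1 := by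
      rw [replace_sUB_00, List.length_append,
        length_flat (blkU (2*t+3)) 12 _ (fun j _ => rfl)]
      simp
    have hmin : u1.length ≤ 12*t+1 := hvlen ▸ h1.2 _ hv
    obtain ⟨a, b, c, hcm, hu1⟩ := h1.1
    have hab : a = 0 ∧ b = 0 := by
      by_contra hne
      have hcnt := cnt_sUB t a b hne
      have hlr := length_le_replace a b c (sUB t)
      rw [← hu1] at hlr
      omega
    obtain ⟨rfl, rfl⟩ := hab
    rw [replace_sUB_00 t c] at hu1
    have hu1len : u1.length = 12*t+1 := by
      rw [hu1, List.length_append, length_flat (blkU c) 12 _ (fun j _ => rfl)]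
      simp
    have H1 : ∀ x y, cnt u1 x y ≤ t := by
      rw [hu1]; exact fun x y => cnt_u t c x y ht hcm
    -- rounds 2-4 each reduce the length by at most t
    have f2 := fullstep_facts t h2.1 H1
    have f3 := fullstep_facts t h3.1 f2.2
    have f4 := fullstep_facts t h4.1 f3.2
    have h0' : t' = u4 := h0
    subst h0'
    omega
  · -- the optimal merge sequence
    have hw4len : ((List.range t).flatMap (blk4 t) ++ [0,0]).length = 6*t+2 := by
      rw [List.length_append, length_flat (blk4 t) 6 _ (fun j _ => rfl)]
      simp
    have hreach : FullReach 4 (sUB t) ((List.range t).flatMap (blk4 t) ++ [0,0]) :=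
      ⟨(List.range t).flatMap (blk1 t) ++ [0,0],
        ⟨0, 2, 2*t+3, fun hm => by have := mem_sUB hm; omega, (rep1 t).symm⟩,
       (List.range t).flatMap (blk2 t) ++ [0,0],
        ⟨2*t+3, 0, 2*t+4, fun hm => by have := mem_w1 hm; omega, (rep2 t).symm⟩,
       (List.range t).flatMap (blk3 t) ++ [0,0],
        ⟨0, 1, 2*t+5, fun hm => by have := mem_w2 hm; omega, (rep3 t).symm⟩,
       (List.range t).flatMap (blk4 t) ++ [0,0],
        ⟨2*t+5, 0, 2*t+6, fun hm => by have := mem_w3 hm; omega, (rep4 t).symm⟩,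
       rfl⟩
    have hbdd : BddAbove {u : ℕ | ∃ t'' : List ℕ,
        FullReach 4 (sUB t) t'' ∧ u = (sUB t).length - t''.length} :=
      ⟨(sUB t).length, fun n hn => by obtain ⟨t'', _, rfl⟩ := hn; exact Nat.sub_le _ _⟩
    have hmem : 8 * t ∈ {u : ℕ | ∃ t'' : List ℕ,
        FullReach 4 (sUB t) t'' ∧ u = (sUB t).length - t''.length} :=
      ⟨_, hreach, by rw [hslen, hw4len]; omega⟩
    exact le_csSup hbdd hmem
end
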